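/- Let V be a ℤ₊-graded vertex algebra and O(V), ∗ as in Zhu's construction. Then O(V) is a two-sided ideal for the operation ∗ (i.e., u ∗ c and c ∗ u lie in O(V) for all u ∈ V, c ∈ O(V)), and the induced product on A(V) = V/O(V) is associative with the image of the vacuum 𝟙 as identity element. -/

import Mathlib

noncomputable section

open scoped BigOperators

/-- The generalized binomial coefficient `C(n, k)` for `n : ℤ`, `k : ℕ`, valued in `ℂ`. -/
def zchoose (n : ℤ) (k : ℕ) : ℂ :=
  (∏ i ∈ Finset.range k, ((n : ℂ) - (i : ℂ))) / (k.factorial : ℂ)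

/-- A vertex algebra over `ℂ`: a state-field correspondence given by modes
`mode u n : V →ₗ[ℂ] V` (the coefficient `u_n` of `Y(u,z) = ∑ u_n z^{-n-1}`), a vacuum `𝟙`
with `Y(𝟙,z) = id`, creation property, truncation, and the Jacobi identity in the
equivalent form of the Borcherds identity on modes. -/
structure VertexAlgebra (V : Type*) [AddCommGroup V] [Module ℂ V] where
  mode : V →ₗ[ℂ] ℤ → V →ₗ[ℂ] V
  vacuum : V
  vacuum_mode : ∀ (n : ℤ) (v : V), mode vacuum n v = if n = -1 then v else 0
  creation : ∀ u : V, mode u (-1) vacuum = u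
  creation_nonneg : ∀ (u : V) (n : ℤ), 0 ≤ n → mode u n vacuum = 0
  truncation : ∀ u v : V, ∃ N : ℕ, ∀ n : ℕ, N ≤ n → mode u (n : ℤ) v = 0
  borcherds : ∀ (u v w : V) (p q r : ℤ),
    ∑ᶠ i : ℕ, zchoose p i • mode (mode u (r + (i : ℤ)) v) (p + q - (i : ℤ)) w
      = ∑ᶠ i : ℕ, ((-1 : ℂ) ^ i * zchoose r i) •
          (mode u (p + r - (i : ℤ)) (mode v (q + (i : ℤ)) w)
            - ((-1 : ℂ) ^ r) • mode v (q + r - (i : ℤ)) (mode u (p + (i : ℤ)) w))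

/-- A `ℤ₊`-graded vertex algebra: `V = ⊕_{n ≥ 0} V_n` with `dim V_0 = 1`, vacuum of
weight `0`, and `u_m w ∈ V_{i+j-m-1}` for `u ∈ V_i`, `w ∈ V_j` (the supremum below
being `⊥` when `i + j - m - 1 < 0`). -/
structure GradedVertexAlgebra (V : Type*) [AddCommGroup V] [Module ℂ V]
    extends VertexAlgebra V where
  grade : ℕ → Submodule ℂ V
  decomp : DirectSum.Decomposition grade
  vacuum_mem : vacuum ∈ grade 0
  grade_zero_dim : Module.finrank ℂ (grade 0) = 1
  mode_grade : ∀ (i j : ℕ) (m : ℤ) (u w : V), u ∈ grade i → w ∈ grade j →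
    mode u m w ∈ ⨆ (k : ℕ) (_ : (k : ℤ) = (i : ℤ) + (j : ℤ) - m - 1), grade k

namespace GradedVertexAlgebra

variable {V : Type*} [AddCommGroup V] [Module ℂ V]

/-- `V_+ = ⊕_{n ≥ 1} V_n`. -/
def Vplus (W : GradedVertexAlgebra V) : Submodule ℂ V :=
  ⨆ n : {n : ℕ // 1 ≤ n}, W.grade n

/-- `C_1(V)`: the span of all `u_{-1}v` and `u_{-2}𝟙` for `u, v ∈ V_+`. -/
def C1 (W : GradedVertexAlgebra V) : Submodule ℂ V :=
  Submodule.span ℂ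
    ({x | ∃ u ∈ W.Vplus, ∃ v ∈ W.Vplus, x = W.mode u (-1) v} ∪
     {x | ∃ u ∈ W.Vplus, x = W.mode u (-2) W.vacuum})

/-- Zhu's product `u ∗ v = Res_z Y(u,z)v (1+z)^k / z = ∑_i C(k,i) u_{i-1} v` for `u`
homogeneous of weight `k`. -/
def starH (W : GradedVertexAlgebra V) (k : ℕ) (u v : V) : V :=
  ∑ i ∈ Finset.range (k + 1), (k.choose i : ℂ) • W.mode u ((i : ℤ) - 1) v

/-- `u ∘ v = Res_z Y(u,z)v (1+z)^k / z² = ∑_i C(k,i) u_{i-2} v` for `u` homogeneous of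
weight `k`. -/
def circH (W : GradedVertexAlgebra V) (k : ℕ) (u v : V) : V :=
  ∑ i ∈ Finset.range (k + 1), (k.choose i : ℂ) • W.mode u ((i : ℤ) - 2) v

/-- `O(V)`: the span of all `u ∘ v` for homogeneous `u` and arbitrary `v`. -/
def O (W : GradedVertexAlgebra V) : Submodule ℂ V :=
  Submodule.span ℂ {x | ∃ (k : ℕ) (u v : V), u ∈ W.grade k ∧ x = W.circH k u v}

/-- The homogeneous component of weight `k` of a vector. -/
noncomputable def component (W : GradedVertexAlgebra V) (k : ℕ) (v : V) : V :=
  letI := W.decomp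
  ((DirectSum.decompose W.grade v) k : V)

/-- Zhu's product `∗` on all of `V`, extended linearly from homogeneous first arguments. -/
noncomputable def gstar (W : GradedVertexAlgebra V) (u v : V) : V :=
  ∑ᶠ k : ℕ, W.starH k (W.component k u) v

end GradedVertexAlgebra

/-! ### Auxiliary development towards Zhu's theorem -/

open Finset

section ZchooseLemmas

lemma zchoose_zero' (n : ℤ) : zchoose n 0 = 1 := by simp [zchoose]

lemma zchoose_succ' (n : ℤ) (k : ℕ) :
    zchoose n (k + 1) = zchoose n k * ((n : ℂ) - k) / (k + 1) := by
  have h1 : (k.factorial : ℂ) ≠ 0 := Nat.cast_ne_zero.2 k.factorial_ne_zero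
  have h2 : ((k : ℂ) + 1) ≠ 0 := Nat.cast_add_one_ne_zero k
  rw [zchoose, zchoose, Finset.prod_range_succ, Nat.factorial_succ]
  push_cast
  field_simp
  try tauto

lemma zchoose_nat (s k : ℕ) : zchoose (s : ℤ) k = (s.choose k : ℂ) := by
  induction k with
  | zero => simp [zchoose]
  | succ k ih =>
    rw [zchoose_succ', ih]
    have h2 : ((k : ℂ) + 1) ≠ 0 := Nat.cast_add_one_ne_zero k
    push_cast
    rw [div_eq_iff h2]
    rcases le_or_gt (k + 1) s with h | h
    · have hnat := Nat.choose_succ_right_eq s k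
      have h4 : ((s.choose (k+1) * (k+1) : ℕ) : ℂ) = ((s.choose k * (s - k) : ℕ) : ℂ) := by
        exact_mod_cast congrArg (Nat.cast : ℕ → ℂ) hnat
      push_cast [Nat.cast_sub (show k ≤ s by omega)] at h4
      linear_combination -h4
    · have h1 : s.choose (k+1) = 0 := Nat.choose_eq_zero_of_lt h
      rcases lt_or_eq_of_le (Nat.lt_succ_iff.mp h) with h' | h'
      · rw [Nat.choose_eq_zero_of_lt h', h1]; simp
      · subst h'
        rw [h1]; simp

lemma zchoose_nat_eq_zero {s k : ℕ} (h : s < k) : zchoose (s : ℤ) k = 0 := by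
  rw [zchoose_nat]; simp [Nat.choose_eq_zero_of_lt h]

lemma zchoose_neg_one (k : ℕ) : zchoose (-1) k = (-1 : ℂ) ^ k := by
  induction k with
  | zero => simp [zchoose]
  | succ k ih =>
    have h2 : ((k : ℂ) + 1) ≠ 0 := Nat.cast_add_one_ne_zero k
    rw [zchoose_succ', ih]
    field_simp
    ring

lemma zchoose_neg_two (k : ℕ) : zchoose (-2) k = (-1 : ℂ) ^ k * ((k : ℂ) + 1) := by
  induction k with
  | zero => simp [zchoose]
  | succ k ih =>
    have h2 : ((k : ℂ) + 1) ≠ 0 := Nat.cast_add_one_ne_zero k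
    rw [zchoose_succ', ih]
    field_simp
    push_cast
    ring

lemma zchoose_one' (n : ℤ) : zchoose n 1 = (n : ℂ) := by
  simp [zchoose]

lemma zchoose_pascal (n : ℤ) (k : ℕ) :
    zchoose n k + zchoose n (k + 1) = zchoose (n + 1) (k + 1) := by
  have h1 : (k.factorial : ℂ) ≠ 0 := Nat.cast_ne_zero.2 k.factorial_ne_zero
  have h2 : ((k : ℂ) + 1) ≠ 0 := Nat.cast_add_one_ne_zero k
  have key : ∏ i ∈ Finset.range (k+1), ((n:ℂ) + 1 - (i:ℂ))
      = (∏ i ∈ Finset.range k, ((n : ℂ) - (i:ℂ))) * ((n : ℂ) + 1) := by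
    rw [Finset.prod_range_succ']
    congr 1
    · apply Finset.prod_congr rfl
      intro i _
      push_cast
      ring
    · push_cast
      ring
  have e : ∀ i : ℕ, ((n + 1 : ℤ) : ℂ) - (i : ℂ) = (n:ℂ) + 1 - (i:ℂ) := by
    intro i; push_cast; ring
  rw [zchoose, zchoose, zchoose, Nat.factorial_succ]
  simp only [e]
  rw [key, Finset.prod_range_succ]
  push_cast
  field_simp
  ring

lemma zchoose_pred (j l : ℕ) :
    zchoose ((j : ℤ) - 1) l = ∑ t ∈ Finset.range (l + 1), (-1 : ℂ) ^ (l - t) * (j.choose t : ℂ) := by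
  induction l with
  | zero => simp [zchoose]
  | succ l ih =>
    have hpas := zchoose_pascal ((j : ℤ) - 1) l
    have hj : ((j : ℤ) - 1) + 1 = (j : ℤ) := by ring
    rw [hj, zchoose_nat] at hpas
    have hLHS : zchoose ((j : ℤ) - 1) (l + 1) = (j.choose (l+1) : ℂ) - zchoose ((j:ℤ)-1) l := by
      linear_combination hpas
    rw [hLHS, ih]
    conv_rhs => rw [Finset.sum_range_succ]
    have hcong : ∀ t ∈ Finset.range (l+1), (-1 : ℂ) ^ (l + 1 - t) * (j.choose t : ℂ)
        = -((-1 : ℂ) ^ (l - t) * (j.choose t : ℂ)) := by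
      intro t ht
      have ht' : t ≤ l := by simpa [Nat.lt_succ_iff] using ht
      have h3 : l + 1 - t = (l - t) + 1 := by omega
      rw [h3, pow_succ]
      ring
    rw [Finset.sum_congr rfl hcong]
    rw [Finset.sum_neg_distrib]
    simp [Nat.sub_self]
    ring

end ZchooseLemmas
section FinsumHelper

lemma finsum_eq_range {M : Type*} [AddCommMonoid M] {f : ℕ → M} (N : ℕ)
    (h : ∀ i, N ≤ i → f i = 0) : ∑ᶠ i, f i = ∑ i ∈ Finset.range N, f i := by
  apply finsum_eq_finset_sum_of_support_subset
  intro i hi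
  simp only [Function.mem_support] at hi
  simp only [Finset.coe_range, Set.mem_Iio]
  by_contra hc
  exact hi (h i (by omega))

end FinsumHelper

namespace GradedVertexAlgebra

variable {V : Type*} [AddCommGroup V] [Module ℂ V] (W : GradedVertexAlgebra V)

lemma mode_zero_left (p : ℤ) (v : V) : W.mode 0 p v = 0 := by
  have h : W.mode (0 : V) = 0 := map_zero _
  rw [h]
  rfl

lemma mode_add_left (u u' : V) (p : ℤ) (v : V) :
    W.mode (u + u') p v = W.mode u p v + W.mode u' p v := by
  have h : W.mode (u + u') = W.mode u + W.mode u' := map_add _ _ _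
  rw [h]
  rfl

lemma mode_smul_left (c : ℂ) (u : V) (p : ℤ) (v : V) :
    W.mode (c • u) p v = c • W.mode u p v := by
  have h : W.mode (c • u) = c • W.mode u := map_smul _ _ _
  rw [h]
  rfl

lemma trunc' (u v : V) : ∃ N : ℕ, ∀ n : ℤ, (N : ℤ) ≤ n → W.mode u n v = 0 := by
  obtain ⟨N, hN⟩ := W.truncation u v
  refine ⟨N, fun n hn => ?_⟩
  have h0 : 0 ≤ n := le_trans (Int.ofNat_nonneg N) hn
  have h1 : n = ((n.toNat : ℕ) : ℤ) := (Int.toNat_of_nonneg h0).symm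
  rw [h1]
  exact hN n.toNat (by omega)

/-- The `L(-1)`-derivative formula: `(u_{-2}𝟙)_p = -p u_{p-1}`. -/
lemma mode_deriv (u w : V) (p : ℤ) :
    W.mode (W.mode u (-2) W.vacuum) p w = ((-p : ℤ) : ℂ) • W.mode u (p - 1) w := by
  have hb := W.borcherds u W.vacuum w p 0 (-2)
  have hR : (∑ᶠ i : ℕ, ((-1 : ℂ) ^ i * zchoose (-2) i) •
      (W.mode u (p + (-2) - (i : ℤ)) (W.mode W.vacuum (0 + (i : ℤ)) w)
        - ((-1 : ℂ) ^ (-2 : ℤ)) • W.mode W.vacuum (0 + (-2) - (i : ℤ)) (W.mode u (p + (i : ℤ)) w)))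
      = 0 := by
    have : ∀ i : ℕ, ((-1 : ℂ) ^ i * zchoose (-2) i) •
        (W.mode u (p + (-2) - (i : ℤ)) (W.mode W.vacuum (0 + (i : ℤ)) w)
          - ((-1 : ℂ) ^ (-2 : ℤ)) • W.mode W.vacuum (0 + (-2) - (i : ℤ)) (W.mode u (p + (i : ℤ)) w))
        = 0 := by
      intro i
      rw [W.vacuum_mode, W.vacuum_mode]
      rw [if_neg (by omega), if_neg (by omega)]
      simp
    rw [finsum_congr this]
    simp
  rw [hR] at hb
  rw [finsum_eq_range 2 ?_] at hb
  · rw [Finset.sum_range_succ, Finset.sum_range_one] at hb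
    have e0 : W.mode u (-2 + ((0 : ℕ) : ℤ)) W.vacuum = W.mode u (-2) W.vacuum := by norm_num
    have e1 : W.mode u (-2 + ((1 : ℕ) : ℤ)) W.vacuum = u := by
      norm_num
      exact W.creation u
    rw [e0, e1, zchoose_zero', zchoose_one'] at hb
    have e2 : p + 0 - ((0 : ℕ) : ℤ) = p := by norm_num
    have e3 : p + 0 - ((1 : ℕ) : ℤ) = p - 1 := by norm_num
    rw [e2, e3, one_smul] at hb
    have h5 : W.mode (W.mode u (-2) W.vacuum) p w = -((p : ℂ) • W.mode u (p - 1) w) :=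
      eq_neg_of_add_eq_zero_left hb
    rw [h5]
    push_cast
    rw [neg_smul]
  · intro i hi
    have hz : W.mode u (-2 + (i : ℤ)) W.vacuum = 0 :=
      W.creation_nonneg u _ (by omega)
    rw [hz, W.mode_zero_left, smul_zero]

/-- The commutator formula. -/
lemma comm_formula (u a w : V) (p q : ℤ) (N : ℕ) (hN : ∀ i : ℕ, N ≤ i → W.mode u (i : ℤ) a = 0) :
    W.mode u p (W.mode a q w) - W.mode a q (W.mode u p w)
      = ∑ i ∈ Finset.range N, zchoose p i • W.mode (W.mode u (i : ℤ) a) (p + q - i) w := by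
  have hb := W.borcherds u a w p q 0
  rw [finsum_eq_range N ?_] at hb
  · have hR : (∑ᶠ i : ℕ, ((-1 : ℂ) ^ i * zchoose 0 i) •
        (W.mode u (p + 0 - (i : ℤ)) (W.mode a (q + (i : ℤ)) w)
          - ((-1 : ℂ) ^ (0 : ℤ)) • W.mode a (q + 0 - (i : ℤ)) (W.mode u (p + (i : ℤ)) w)))
        = W.mode u p (W.mode a q w) - W.mode a q (W.mode u p w) := by
      rw [finsum_eq_single _ 0 ?_]
      · norm_num [zchoose_zero']
      · intro i hi
        have : zchoose ((0 : ℕ) : ℤ) i = 0 := zchoose_nat_eq_zero (by omega)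
        norm_num at this
        rw [this]
        simp
    rw [hR] at hb
    rw [← hb]
    apply Finset.sum_congr rfl
    intro i _
    norm_num
  · intro i hi
    rw [show (0 : ℤ) + (i : ℤ) = (i : ℤ) by ring, hN i hi, W.mode_zero_left, smul_zero]

/-- Borcherds identity with `p = s` a natural number: finite iterate side. -/
lemma borcherds_nat (u v w : V) (s : ℕ) (q r : ℤ) :
    ∑ i ∈ Finset.range (s + 1), (s.choose i : ℂ) • W.mode (W.mode u (r + i) v) ((s : ℤ) + q - i) w
      = ∑ᶠ i : ℕ, ((-1 : ℂ) ^ i * zchoose r i) •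
          (W.mode u ((s : ℤ) + r - i) (W.mode v (q + i) w)
            - ((-1 : ℂ) ^ r) • W.mode v (q + r - i) (W.mode u ((s : ℤ) + i) w)) := by
  have hb := W.borcherds u v w (s : ℤ) q r
  rw [finsum_eq_range (s + 1) ?_] at hb
  · rw [← hb]
    apply Finset.sum_congr rfl
    intro i _
    rw [zchoose_nat]
  · intro i hi
    rw [zchoose_nat_eq_zero (by omega), zero_smul]

lemma borcherds_neg_one (u v w : V) (s : ℕ) (q : ℤ) (N : ℕ)
    (hvw : ∀ i : ℕ, N ≤ i → W.mode v (q + i) w = 0)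
    (huw : ∀ i : ℕ, N ≤ i → W.mode u ((s : ℤ) + i) w = 0) :
    ∑ i ∈ Finset.range (s + 1), (s.choose i : ℂ) • W.mode (W.mode u (-1 + i) v) ((s : ℤ) + q - i) w
      = ∑ i ∈ Finset.range N,
          (W.mode u ((s : ℤ) - 1 - i) (W.mode v (q + i) w)
            + W.mode v (q - 1 - i) (W.mode u ((s : ℤ) + i) w)) := by
  rw [W.borcherds_nat u v w s q (-1)]
  rw [finsum_eq_range N ?_]
  · apply Finset.sum_congr rfl
    intro i _
    rw [zchoose_neg_one]
    have hc : (-1 : ℂ) ^ i * (-1 : ℂ) ^ i = 1 := by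
      rw [← mul_pow]; norm_num
    rw [hc, one_smul]
    have hz : ((-1 : ℂ) ^ (-1 : ℤ)) = -1 := by
      rw [zpow_neg_one]
      norm_num
    rw [hz]
    have e1 : (s : ℤ) + -1 - (i : ℤ) = (s : ℤ) - 1 - i := by ring
    have e2 : q + -1 - (i : ℤ) = q - 1 - i := by ring
    rw [e1, e2, neg_one_smul, sub_neg_eq_add]
  · intro i hi
    rw [hvw i hi, huw i hi]
    simp

lemma borcherds_neg_two (u v w : V) (s : ℕ) (q : ℤ) (N : ℕ)
    (hvw : ∀ i : ℕ, N ≤ i → W.mode v (q + i) w = 0)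
    (huw : ∀ i : ℕ, N ≤ i → W.mode u ((s : ℤ) + i) w = 0) :
    ∑ i ∈ Finset.range (s + 1), (s.choose i : ℂ) • W.mode (W.mode u (-2 + i) v) ((s : ℤ) + q - i) w
      = ∑ i ∈ Finset.range N, ((i : ℂ) + 1) •
          (W.mode u ((s : ℤ) - 2 - i) (W.mode v (q + i) w)
            - W.mode v (q - 2 - i) (W.mode u ((s : ℤ) + i) w)) := by
  rw [W.borcherds_nat u v w s q (-2)]
  rw [finsum_eq_range N ?_]
  · apply Finset.sum_congr rfl
    intro i _
    rw [zchoose_neg_two]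
    have hc : (-1 : ℂ) ^ i * ((-1 : ℂ) ^ i * ((i : ℂ) + 1)) = (i : ℂ) + 1 := by
      rw [← mul_assoc, ← mul_pow]; norm_num
    rw [hc]
    have hz : ((-1 : ℂ) ^ (-2 : ℤ)) = 1 := by
      norm_num
    rw [hz, one_smul]
    have e1 : (s : ℤ) + -2 - (i : ℤ) = (s : ℤ) - 2 - i := by ring
    have e2 : q + -2 - (i : ℤ) = q - 2 - i := by ring
    rw [e1, e2]
  · intro i hi
    rw [hvw i hi, huw i hi, (W.mode u _).map_zero, (W.mode v _).map_zero, smul_zero, sub_zero,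
      smul_zero]

end GradedVertexAlgebra
namespace GradedVertexAlgebra

variable {V : Type*} [AddCommGroup V] [Module ℂ V] (W : GradedVertexAlgebra V)

/-! ### Grading lemmas -/

lemma mode_mem_grade {i j k : ℕ} {m : ℤ} {u w : V} (hu : u ∈ W.grade i) (hw : w ∈ W.grade j)
    (hk : (k : ℤ) = (i : ℤ) + j - m - 1) : W.mode u m w ∈ W.grade k := by
  have h := W.mode_grade i j m u w hu hw
  have hle : (⨆ (k' : ℕ) (_ : (k' : ℤ) = (i : ℤ) + j - m - 1), W.grade k') ≤ W.grade k := by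
    apply iSup_le
    intro k'
    apply iSup_le
    intro hk'
    have : k' = k := by
      have : (k' : ℤ) = (k : ℤ) := by omega
      exact_mod_cast this
    rw [this]
  exact hle h

lemma mode_eq_zero_of_neg {i j : ℕ} {m : ℤ} {u w : V} (hu : u ∈ W.grade i) (hw : w ∈ W.grade j)
    (h : (i : ℤ) + j - m - 1 < 0) : W.mode u m w = 0 := by
  have hm := W.mode_grade i j m u w hu hw
  have hle : (⨆ (k' : ℕ) (_ : (k' : ℤ) = (i : ℤ) + j - m - 1), W.grade k') ≤ ⊥ := by
    apply iSup_le
    intro k'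
    apply iSup_le
    intro hk'
    exfalso
    have : (0 : ℤ) ≤ (k' : ℤ) := Int.ofNat_nonneg k'
    omega
  have := hle hm
  simpa using this

/-! ### Component lemmas -/

lemma component_mem (k : ℕ) (x : V) : W.component k x ∈ W.grade k := by
  letI := W.decomp
  exact ((DirectSum.decompose W.grade x) k).2

lemma component_of_mem_same {k : ℕ} {x : V} (h : x ∈ W.grade k) : W.component k x = x := by
  letI := W.decomp
  exact DirectSum.decompose_of_mem_same W.grade h

lemma component_of_mem_ne {k j : ℕ} {x : V} (h : x ∈ W.grade k) (hne : k ≠ j) :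
    W.component j x = 0 := by
  letI := W.decomp
  exact DirectSum.decompose_of_mem_ne W.grade h hne

lemma component_add (k : ℕ) (x y : V) :
    W.component k (x + y) = W.component k x + W.component k y := by
  letI := W.decomp
  show ((DirectSum.decompose W.grade (x + y)) k : V) = _
  rw [DirectSum.decompose_add, DirectSum.add_apply]
  rfl

lemma component_smul (k : ℕ) (c : ℂ) (x : V) :
    W.component k (c • x) = c • W.component k x := by
  letI := W.decomp
  show ((DirectSum.decompose W.grade (c • x)) k : V) = _
  rw [DirectSum.decompose_smul]
  rfl

lemma component_zero (k : ℕ) : W.component k (0 : V) = 0 := by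
  letI := W.decomp
  show ((DirectSum.decompose W.grade (0 : V)) k : V) = _
  rw [DirectSum.decompose_zero, DirectSum.zero_apply, ZeroMemClass.coe_zero]

lemma component_finite (x : V) : {k : ℕ | W.component k x ≠ 0}.Finite := by
  letI := W.decomp
  apply Set.Finite.subset (DFinsupp.finite_support (DirectSum.decompose W.grade x))
  intro k hk
  simp only [Set.mem_setOf_eq] at hk ⊢
  intro h0
  apply hk
  show ((DirectSum.decompose W.grade x) k : V) = 0
  rw [h0]
  rfl

lemma finsum_component (x : V) : ∑ᶠ k : ℕ, W.component k x = x := by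
  letI := W.decomp
  classical
  rw [finsum_eq_finset_sum_of_support_subset _
    (s := (DirectSum.decompose W.grade x).support) ?_]
  · exact DirectSum.sum_support_decompose W.grade x
  · intro k hk
    simp only [Function.mem_support] at hk
    simp only [Finset.coe_sort_coe, Finset.mem_coe, DFinsupp.mem_support_iff]
    intro h0
    apply hk
    show ((DirectSum.decompose W.grade x) k : V) = 0
    rw [h0]
    rfl

/-! ### starH and gstar basics -/

lemma starH_zero_left (k : ℕ) (v : V) : W.starH k 0 v = 0 := by
  simp [starH, mode_zero_left]

lemma starH_add_left (k : ℕ) (u u' v : V) :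
    W.starH k (u + u') v = W.starH k u v + W.starH k u' v := by
  simp [starH, mode_add_left, smul_add, Finset.sum_add_distrib]

lemma starH_smul_left (k : ℕ) (c : ℂ) (u v : V) :
    W.starH k (c • u) v = c • W.starH k u v := by
  simp [starH, mode_smul_left, Finset.smul_sum, smul_smul, mul_comm]

lemma starH_zero_right (k : ℕ) (u : V) : W.starH k u 0 = 0 := by
  simp [starH]

lemma starH_add_right (k : ℕ) (u v v' : V) :
    W.starH k u (v + v') = W.starH k u v + W.starH k u v' := by
  simp [starH, map_add, smul_add, Finset.sum_add_distrib]

lemma starH_smul_right (k : ℕ) (c : ℂ) (u v : V) :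
    W.starH k u (c • v) = c • W.starH k u v := by
  simp [starH, map_smul, Finset.smul_sum, smul_smul, mul_comm]

lemma circH_zero_right (k : ℕ) (u : V) : W.circH k u 0 = 0 := by
  simp [circH]

lemma circH_add_right (k : ℕ) (u v v' : V) :
    W.circH k u (v + v') = W.circH k u v + W.circH k u v' := by
  simp [circH, map_add, smul_add, Finset.sum_add_distrib]

lemma circH_smul_right (k : ℕ) (c : ℂ) (u v : V) :
    W.circH k u (c • v) = c • W.circH k u v := by
  simp [circH, map_smul, Finset.smul_sum, smul_smul, mul_comm]

lemma gstar_eq_sum (x v : V) {s : Finset ℕ} (hs : ∀ k, k ∉ s → W.component k x = 0) :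
    W.gstar x v = ∑ k ∈ s, W.starH k (W.component k x) v := by
  apply finsum_eq_finset_sum_of_support_subset
  intro k hk
  simp only [Function.mem_support] at hk
  simp only [Finset.mem_coe]
  by_contra hc
  rw [hs k hc, starH_zero_left] at hk
  exact hk rfl

lemma gstar_zero_left (v : V) : W.gstar 0 v = 0 := by
  rw [gstar_eq_sum W 0 v (s := ∅) (fun k _ => W.component_zero k)]
  simp

lemma gstar_add_left (x y v : V) : W.gstar (x + y) v = W.gstar x v + W.gstar y v := by
  classical
  set s := ((W.component_finite x).union (W.component_finite y)).toFinset with hs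
  have hmem : ∀ k, k ∉ s → W.component k x = 0 ∧ W.component k y = 0 := by
    intro k hk
    rw [hs, Set.Finite.mem_toFinset] at hk
    simp only [Set.mem_union, Set.mem_setOf_eq, not_or, not_not] at hk
    exact hk
  rw [gstar_eq_sum W (x + y) v (s := s) (fun k hk => by
      rw [W.component_add, (hmem k hk).1, (hmem k hk).2, add_zero]),
    gstar_eq_sum W x v (s := s) (fun k hk => (hmem k hk).1),
    gstar_eq_sum W y v (s := s) (fun k hk => (hmem k hk).2),
    ← Finset.sum_add_distrib]
  apply Finset.sum_congr rfl
  intro k _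
  rw [W.component_add, W.starH_add_left]

lemma gstar_smul_left (c : ℂ) (x v : V) : W.gstar (c • x) v = c • W.gstar x v := by
  classical
  set s := (W.component_finite x).toFinset with hs
  have hmem : ∀ k, k ∉ s → W.component k x = 0 := by
    intro k hk
    rw [hs, Set.Finite.mem_toFinset] at hk
    simpa using hk
  rw [gstar_eq_sum W (c • x) v (s := s) (fun k hk => by
      rw [W.component_smul, hmem k hk, smul_zero]),
    gstar_eq_sum W x v (s := s) (fun k hk => hmem k hk), Finset.smul_sum]
  apply Finset.sum_congr rfl
  intro k _
  rw [W.component_smul, W.starH_smul_left]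

lemma gstar_zero_right (x : V) : W.gstar x 0 = 0 := by
  show (∑ᶠ k : ℕ, W.starH k (W.component k x) 0) = 0
  rw [finsum_congr (fun k => W.starH_zero_right k (W.component k x))]
  exact finsum_zero

lemma gstar_add_right (x v v' : V) : W.gstar x (v + v') = W.gstar x v + W.gstar x v' := by
  classical
  set s := (W.component_finite x).toFinset with hs
  have hmem : ∀ k, k ∉ s → W.component k x = 0 := by
    intro k hk
    rw [hs, Set.Finite.mem_toFinset] at hk
    simpa using hk
  rw [gstar_eq_sum W x (v + v') (s := s) hmem, gstar_eq_sum W x v (s := s) hmem,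
    gstar_eq_sum W x v' (s := s) hmem, ← Finset.sum_add_distrib]
  apply Finset.sum_congr rfl
  intro k _
  rw [W.starH_add_right]

lemma gstar_smul_right (c : ℂ) (x v : V) : W.gstar x (c • v) = c • W.gstar x v := by
  classical
  set s := (W.component_finite x).toFinset with hs
  have hmem : ∀ k, k ∉ s → W.component k x = 0 := by
    intro k hk
    rw [hs, Set.Finite.mem_toFinset] at hk
    simpa using hk
  rw [gstar_eq_sum W x (c • v) (s := s) hmem, gstar_eq_sum W x v (s := s) hmem,
    Finset.smul_sum]
  apply Finset.sum_congr rfl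
  intro k _
  rw [W.starH_smul_right]

lemma gstar_homog {k : ℕ} {x : V} (hx : x ∈ W.grade k) (v : V) :
    W.gstar x v = W.starH k x v := by
  rw [gstar_eq_sum W x v (s := {k}) ?_]
  · rw [Finset.sum_singleton, W.component_of_mem_same hx]
  · intro j hj
    exact W.component_of_mem_ne hx (fun hkj => (by simpa using hj : ¬ j = k) hkj.symm)

end GradedVertexAlgebra
namespace GradedVertexAlgebra

variable {V : Type*} [AddCommGroup V] [Module ℂ V] (W : GradedVertexAlgebra V)

lemma Odeep : ∀ (n : ℕ) {k : ℕ} {u : V}, u ∈ W.grade k → ∀ v : V,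
    (∑ i ∈ Finset.range (k + 1), (k.choose i : ℂ) • W.mode u ((i : ℤ) - 2 - (n : ℤ)) v) ∈ W.O := by
  intro n
  induction n with
  | zero =>
    intro k u hu v
    have he : ∀ i ∈ Finset.range (k+1), (k.choose i : ℂ) • W.mode u ((i:ℤ) - 2 - ((0:ℕ):ℤ)) v
        = (k.choose i : ℂ) • W.mode u ((i:ℤ) - 2) v := by
      intro i _
      norm_num
    rw [Finset.sum_congr rfl he]
    exact Submodule.subset_span ⟨k, u, v, hu, rfl⟩
  | succ n ih =>
    intro k u hu v
    set u' := W.mode u (-2) W.vacuum with hu'def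
    have hu' : u' ∈ W.grade (k + 1) := W.mode_mem_grade hu W.vacuum_mem (by push_cast; ring)
    have hT' := ih hu' v
    have hTn := ih hu v
    set y : ℕ → V := fun i => W.mode u ((i : ℤ) - 3 - (n : ℤ)) v with hy
    have hterm : ∀ i ∈ Finset.range (k+1+1),
        (((k+1).choose i : ℂ)) • W.mode u' ((i:ℤ) - 2 - (n:ℤ)) v
          = (((k+1).choose i : ℂ) * ((n:ℂ) + 2 - (i:ℂ))) • y i := by
      intro i _
      rw [hu'def, W.mode_deriv u v ((i:ℤ) - 2 - (n:ℤ)),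
        show (i:ℤ) - 2 - (n:ℤ) - 1 = (i:ℤ) - 3 - (n:ℤ) from by ring, smul_smul]
      congr 1
      push_cast
      ring
    have hidx1 : ∀ i ∈ Finset.range (k+1),
        (k.choose i : ℂ) • W.mode u ((i:ℤ) - 2 - ((n+1 : ℕ):ℤ)) v = (k.choose i : ℂ) • y i := by
      intro i _
      simp only [hy]
      rw [show (i:ℤ) - 2 - ((n+1 : ℕ):ℤ) = (i:ℤ) - 3 - (n:ℤ) from by push_cast; ring]
    have hidx2 : ∀ i ∈ Finset.range (k+1),
        (k.choose i : ℂ) • W.mode u ((i:ℤ) - 2 - (n:ℤ)) v = (k.choose i : ℂ) • y (i+1) := by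
      intro i _
      simp only [hy]
      rw [show (i:ℤ) - 2 - (n:ℤ) = ((i+1 : ℕ):ℤ) - 3 - (n:ℤ) from by push_cast; ring]
    have main : ∑ i ∈ Finset.range (k+1+1), (((k+1).choose i : ℂ) * ((n:ℂ) + 2 - (i:ℂ))) • y i
        = ((n:ℂ)+2) • (∑ i ∈ Finset.range (k+1), (k.choose i : ℂ) • y i)
          + (((n:ℂ)+1) - (k:ℂ)) • (∑ i ∈ Finset.range (k+1), (k.choose i : ℂ) • y (i+1)) := by
      rw [Finset.sum_range_succ' _ (k+1), Finset.smul_sum, Finset.smul_sum]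
      rw [Finset.sum_range_succ' (fun i => ((n:ℂ)+2) • ((k.choose i : ℂ) • y i)) k]
      have hext : ∑ i ∈ Finset.range k, ((n:ℂ)+2) • ((k.choose (i+1) : ℂ) • y (i+1))
          = ∑ i ∈ Finset.range (k+1), ((n:ℂ)+2) • ((k.choose (i+1) : ℂ) • y (i+1)) := by
        rw [Finset.sum_range_succ, Nat.choose_succ_self]
        simp
      rw [hext]
      have hmidterm : ∀ i ∈ Finset.range (k+1),
          (((k+1).choose (i+1) : ℂ) * ((n:ℂ) + 2 - ((i+1 : ℕ):ℂ))) • y (i+1)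
            = ((n:ℂ)+2) • ((k.choose (i+1) : ℂ) • y (i+1))
              + (((n:ℂ)+1) - (k:ℂ)) • ((k.choose i : ℂ) • y (i+1)) := by
        intro i hi
        have hik : i ≤ k := by
          simpa [Nat.lt_succ_iff] using hi
        have h1 : (((k+1).choose (i+1) : ℕ) : ℂ) = (k.choose i : ℂ) + (k.choose (i+1) : ℂ) := by
          rw [Nat.choose_succ_succ]
          push_cast
          ring
        have h2nat := Nat.choose_succ_right_eq k i
        have h2 : (k.choose (i+1) : ℂ) * ((i:ℂ)+1) = (k.choose i : ℂ) * ((k:ℂ) - (i:ℂ)) := by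
          have := congrArg (Nat.cast : ℕ → ℂ) h2nat
          push_cast [Nat.cast_sub hik] at this
          linear_combination this
        rw [smul_smul, smul_smul, ← add_smul]
        congr 1
        push_cast
        linear_combination ((n:ℂ) + 1 - (i:ℂ)) * h1 - h2
      rw [Finset.sum_congr rfl hmidterm, Finset.sum_add_distrib]
      have hzero : (((k+1).choose 0 : ℂ) * ((n:ℂ) + 2 - ((0:ℕ):ℂ))) • y 0
          = ((n:ℂ)+2) • ((k.choose 0 : ℂ) • y 0) := by
        norm_num
      rw [hzero]
      abel
    have hne : ((n:ℂ) + 2) ≠ 0 := by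
      intro h
      have : (n:ℂ) = -2 := by linear_combination h
      have h2 : ((n:ℝ) : ℂ) = ((-2 : ℝ) : ℂ) := by push_cast; exact_mod_cast this
      have : (n : ℝ) = -2 := by exact_mod_cast h2
      nlinarith [Nat.cast_nonneg (α := ℝ) n]
    have hkey : ∑ i ∈ Finset.range (k+1), (k.choose i : ℂ) • W.mode u ((i:ℤ) - 2 - ((n+1:ℕ):ℤ)) v
        = ((n:ℂ)+2)⁻¹ • ((∑ i ∈ Finset.range (k+1+1),
            (((k+1).choose i : ℂ)) • W.mode u' ((i:ℤ) - 2 - (n:ℤ)) v)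
          - (((n:ℂ)+1) - (k:ℂ)) • (∑ i ∈ Finset.range (k+1),
            (k.choose i : ℂ) • W.mode u ((i:ℤ) - 2 - (n:ℤ)) v)) := by
      rw [Finset.sum_congr rfl hterm, Finset.sum_congr rfl hidx1, Finset.sum_congr rfl hidx2, main]
      rw [add_sub_cancel_right, smul_smul, inv_mul_cancel₀ hne, one_smul]
    rw [hkey]
    exact W.O.smul_mem _ (W.O.sub_mem hT' (W.O.smul_mem _ hTn))

lemma Odeep' {k : ℕ} {u : V} (hu : u ∈ W.grade k) {b : ℤ} (hb : b ≤ -2) (v : V) :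
    (∑ i ∈ Finset.range (k + 1), (k.choose i : ℂ) • W.mode u (b + (i : ℤ)) v) ∈ W.O := by
  have h := W.Odeep (-2 - b).toNat hu v
  have he : ∀ i ∈ Finset.range (k+1), (k.choose i : ℂ) • W.mode u (b + (i:ℤ)) v
      = (k.choose i : ℂ) • W.mode u ((i:ℤ) - 2 - (((-2 - b).toNat : ℕ) : ℤ)) v := by
    intro i _
    rw [show b + (i:ℤ) = (i:ℤ) - 2 - (((-2 - b).toNat : ℕ) : ℤ) from by omega]
  rw [Finset.sum_congr rfl he]
  exact h

end GradedVertexAlgebra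
section Eval

variable {V : Type*} [AddCommGroup V] [Module ℂ V]
variable {G : Type*} [AddCommMonoid G]

/-- The evaluation map sending a formal sum `∑ c_e X^e` to `∑ c_e • vec e`. -/
noncomputable def evAM (vec : G → V) (f : AddMonoidAlgebra ℂ G) : V :=
  Finsupp.sum f.coeff fun e c => c • vec e

lemma evAM_zero (vec : G → V) : evAM vec 0 = 0 := by
  unfold evAM; rw [AddMonoidAlgebra.coeff_zero]; exact
  Finsupp.sum_zero_index

lemma evAM_add (vec : G → V) (f g : AddMonoidAlgebra ℂ G) :
    evAM vec (f + g) = evAM vec f + evAM vec g := by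
  unfold evAM; rw [AddMonoidAlgebra.coeff_add]; exact
  Finsupp.sum_add_index' (fun e => zero_smul ℂ (vec e)) (fun e c d => add_smul c d (vec e))

lemma map_sum_evAM {ι : Type*} (vec : G → V) (s : Finset ι) (F : ι → AddMonoidAlgebra ℂ G) :
    evAM vec (∑ i ∈ s, F i) = ∑ i ∈ s, evAM vec (F i) := by
  classical
  induction s using Finset.induction_on with
  | empty => simp [evAM_zero]
  | insert _ _ hx ih =>
    rw [Finset.sum_insert hx, Finset.sum_insert hx, evAM_add, ih]

lemma evAM_single (vec : G → V) (e : G) (c : ℂ) :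
    evAM vec (AddMonoidAlgebra.single e c) = c • vec e := by
  unfold evAM
  rw [AddMonoidAlgebra.coeff_single, Finsupp.sum_single_index (zero_smul ℂ (vec e))]

/-- Binomial expansion of `(X^{g₁} + X^{g₂})^s · c X^e` into monomials. -/
lemma expand_two (g₁ g₂ : G) (s : ℕ) (e : G) (c : ℂ) :
    (AddMonoidAlgebra.single g₁ (1:ℂ) + AddMonoidAlgebra.single g₂ (1:ℂ)) ^ s
        * AddMonoidAlgebra.single e c
      = ∑ i ∈ Finset.range (s + 1),
          AddMonoidAlgebra.single (i • g₁ + (s - i) • g₂ + e) ((s.choose i : ℂ) * c) := by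
  rw [add_pow, Finset.sum_mul]
  apply Finset.sum_congr rfl
  intro i _
  rw [AddMonoidAlgebra.single_pow, AddMonoidAlgebra.single_pow, one_pow, one_pow,
    AddMonoidAlgebra.single_mul_single, AddMonoidAlgebra.natCast_def,
    AddMonoidAlgebra.single_mul_single, AddMonoidAlgebra.single_mul_single]
  congr 1
  · abel
  · ring

lemma ev_expand_two (vec : G → V) (g₁ g₂ : G) (s : ℕ) (e : G) (c : ℂ) :
    evAM vec ((AddMonoidAlgebra.single g₁ (1:ℂ) + AddMonoidAlgebra.single g₂ (1:ℂ)) ^ s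
        * AddMonoidAlgebra.single e c)
      = ∑ i ∈ Finset.range (s + 1), ((s.choose i : ℂ) * c) • vec (i • g₁ + (s - i) • g₂ + e) := by
  rw [expand_two, map_sum_evAM]
  apply Finset.sum_congr rfl
  intro i _
  rw [evAM_single]

/-- `1 + X^{g}` as an element of the monoid algebra. -/
noncomputable def onePlus (g : G) : AddMonoidAlgebra ℂ G :=
  1 + AddMonoidAlgebra.single g (1:ℂ)

lemma onePlus_eq (g : G) :
    onePlus g = AddMonoidAlgebra.single g (1:ℂ) + AddMonoidAlgebra.single (0:G) (1:ℂ) := by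
  rw [onePlus, AddMonoidAlgebra.one_def, add_comm]

lemma onePlus_pow_mul_single (g : G) (n : ℕ) (e : G) (c : ℂ) :
    (onePlus g) ^ n * AddMonoidAlgebra.single e c
      = ∑ i ∈ Finset.range (n + 1),
          AddMonoidAlgebra.single (i • g + e) ((n.choose i : ℂ) * c) := by
  rw [onePlus_eq, expand_two]
  apply Finset.sum_congr rfl
  intro i _
  rw [smul_zero, add_zero]

lemma ev_onePlus_pow_mul_single (vec : G → V) (g : G) (n : ℕ) (e : G) (c : ℂ) :
    evAM vec ((onePlus g) ^ n * AddMonoidAlgebra.single e c)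
      = ∑ i ∈ Finset.range (n + 1), ((n.choose i : ℂ) * c) • vec (i • g + e) := by
  rw [onePlus_pow_mul_single, map_sum_evAM]
  apply Finset.sum_congr rfl
  intro i _
  rw [evAM_single]

end Eval
section Combinatorics

/-- Trinomial revision: `C(k,t+j) C(t+j,t) = C(k,t) C(k-t,j)`. -/
lemma trinom (k t j : ℕ) (h : t + j ≤ k) :
    k.choose (t + j) * (t + j).choose t = k.choose t * (k - t).choose j := by
  have h1 := Nat.choose_mul_factorial_mul_factorial (show t + j ≤ k from h)
  have h2 := Nat.choose_mul_factorial_mul_factorial (show t ≤ t + j from Nat.le_add_right t j)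
  have h3 := Nat.choose_mul_factorial_mul_factorial (show t ≤ k by omega)
  have h4 := Nat.choose_mul_factorial_mul_factorial (show j ≤ k - t by omega)
  rw [show t + j - t = j from by omega] at h2
  rw [show k - t - j = k - (t + j) from by omega] at h4
  have key : (k.choose (t + j) * (t + j).choose t)
        * (t.factorial * j.factorial * (k - (t + j)).factorial)
      = (k.choose t * (k - t).choose j)
        * (t.factorial * j.factorial * (k - (t + j)).factorial) := by
    calc (k.choose (t + j) * (t + j).choose t)
          * (t.factorial * j.factorial * (k - (t + j)).factorial)
        = k.choose (t + j) * ((t + j).choose t * t.factorial * j.factorial)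
            * (k - (t + j)).factorial := by ring
      _ = k.choose (t + j) * (t + j).factorial * (k - (t + j)).factorial := by rw [h2]
      _ = k.factorial := h1
      _ = k.choose t * t.factorial * (k - t).factorial := h3.symm
      _ = k.choose t * t.factorial * ((k - t).choose j * j.factorial * (k - (t + j)).factorial) :=
          by rw [h4]
      _ = (k.choose t * (k - t).choose j)
            * (t.factorial * j.factorial * (k - (t + j)).factorial) := by ring
  have hpos : 0 < t.factorial * j.factorial * (k - (t + j)).factorial :=
    Nat.mul_pos (Nat.mul_pos t.factorial_pos j.factorial_pos) (k - (t + j)).factorial_pos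
  exact Nat.eq_of_mul_eq_mul_right hpos key

variable {M : Type*} [AddCommGroup M] [Module ℂ M]

/-- Reindexing of `∑_j C(k,j) C(j,t) • z_j`. -/
lemma subset_reindex (z : ℕ → M) (k t : ℕ) :
    ∑ j ∈ Finset.range (k + 1), ((k.choose j : ℂ) * (j.choose t : ℂ)) • z j
      = (k.choose t : ℂ) • ∑ j ∈ Finset.range (k - t + 1), ((k - t).choose j : ℂ) • z (t + j) := by
  rcases le_or_gt t k with h | h
  · rw [show k + 1 = t + (k - t + 1) from by omega, Finset.sum_range_add]
    have hz : ∑ j ∈ Finset.range t, ((k.choose j : ℂ) * (j.choose t : ℂ)) • z j = 0 := by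
      apply Finset.sum_eq_zero
      intro j hj
      rw [Nat.choose_eq_zero_of_lt (Finset.mem_range.mp hj)]
      simp
    rw [hz, zero_add, Finset.smul_sum]
    apply Finset.sum_congr rfl
    intro j hj
    have hj' : t + j ≤ k := by
      have := Finset.mem_range.mp hj
      omega
    rw [smul_smul]
    congr 1
    have hc := trinom k t j hj'
    exact_mod_cast congrArg (Nat.cast : ℕ → ℂ) hc
  · have hz : ∀ j ∈ Finset.range (k + 1), ((k.choose j : ℂ) * (j.choose t : ℂ)) • z j = 0 := by
      intro j hj
      rw [Nat.choose_eq_zero_of_lt (show j < t by have := Finset.mem_range.mp hj; omega)]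
      simp
    rw [Finset.sum_eq_zero hz, Nat.choose_eq_zero_of_lt h]
    simp

/-- Vandermonde convolution at the level of modules. -/
lemma vandermonde_smul (z : ℤ → M) (A B : ℕ) (e : ℤ) :
    ∑ i ∈ Finset.range (A + 1), ∑ j ∈ Finset.range (B + 1),
        ((A.choose i : ℂ) * (B.choose j : ℂ)) • z (e + i + j)
      = ∑ s ∈ Finset.range (A + B + 1), ((A + B).choose s : ℂ) • z (e + s) := by
  have hsplit : (onePlus (1:ℤ)) ^ (A + B) * AddMonoidAlgebra.single e (1:ℂ)
      = (onePlus (1:ℤ)) ^ A * ((onePlus (1:ℤ)) ^ B * AddMonoidAlgebra.single e (1:ℂ)) := by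
    rw [← mul_assoc, ← pow_add]
  have hL := ev_onePlus_pow_mul_single (V := M) z (1:ℤ) (A + B) e 1
  rw [hsplit] at hL
  rw [onePlus_pow_mul_single, Finset.mul_sum, map_sum_evAM] at hL
  have hL2 : ∀ j ∈ Finset.range (B + 1),
      evAM z ((onePlus (1:ℤ)) ^ A
          * AddMonoidAlgebra.single (j • (1:ℤ) + e) ((B.choose j : ℂ) * 1))
        = ∑ i ∈ Finset.range (A + 1), ((A.choose i : ℂ) * (B.choose j : ℂ)) • z (e + i + j) := by
    intro j _
    rw [ev_onePlus_pow_mul_single]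
    apply Finset.sum_congr rfl
    intro i _
    rw [mul_one, show i • (1:ℤ) + (j • (1:ℤ) + e) = e + (i:ℤ) + (j:ℤ) from by
      simp [nsmul_eq_mul]; ring]
  rw [Finset.sum_congr rfl hL2] at hL
  rw [Finset.sum_comm] at hL
  rw [hL]
  apply Finset.sum_congr rfl
  intro s _
  rw [mul_one, show s • (1:ℤ) + e = e + (s:ℤ) from by simp [nsmul_eq_mul]; ring]

end Combinatorics

namespace GradedVertexAlgebra

variable {V : Type*} [AddCommGroup V] [Module ℂ V] (W : GradedVertexAlgebra V)

/-- The key membership criterion: `Res Y(u,z)v (1+z)^{k+j} z^{a}` lies in `O(V)`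
whenever `u ∈ V_k` and all resulting exponents are `≤ -2`. -/
lemma Osum_crit {k : ℕ} {u : V} (hu : u ∈ W.grade k) (j : ℕ) {a : ℤ} (ha : a + (j : ℤ) ≤ -2)
    (v : V) :
    (∑ t ∈ Finset.range (k + j + 1), ((k + j).choose t : ℂ) • W.mode u (a + t) v) ∈ W.O := by
  rw [show (∑ t ∈ Finset.range (k + j + 1), ((k + j).choose t : ℂ) • W.mode u (a + t) v)
      = ∑ i ∈ Finset.range (k + 1), ∑ t ∈ Finset.range (j + 1),
          ((k.choose i : ℂ) * (j.choose t : ℂ)) • W.mode u (a + i + t) v from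
    (vandermonde_smul (fun p => W.mode u p v) k j a).symm]
  rw [Finset.sum_comm]
  apply Submodule.sum_mem
  intro t ht
  have htj : (t : ℤ) ≤ (j : ℤ) := by
    have := Finset.mem_range.mp ht
    omega
  have hstep : ∑ i ∈ Finset.range (k + 1),
        ((k.choose i : ℂ) * (j.choose t : ℂ)) • W.mode u (a + i + t) v
      = (j.choose t : ℂ) • ∑ i ∈ Finset.range (k + 1),
          (k.choose i : ℂ) • W.mode u ((a + t) + i) v := by
    rw [Finset.smul_sum]
    apply Finset.sum_congr rfl
    intro i _
    rw [smul_smul, mul_comm ((j.choose t : ℂ)) _, show a + (i:ℤ) + t = a + (t:ℤ) + i from by ring]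
  rw [hstep]
  exact W.O.smul_mem _ (W.Odeep' hu (by omega) v)

end GradedVertexAlgebra
section ClaimA

variable {M : Type*} [AddCommGroup M] [Module ℂ M]

lemma claimA_abstract (z : ℕ → ℤ → M) (k m : ℕ) :
    ∑ s ∈ Finset.range (k+1), ∑ t ∈ Finset.range (m+1),
        ((k.choose s : ℂ) * (m.choose t : ℂ)) •
          (∑ i ∈ Finset.range (s+1), (s.choose i : ℂ) • z i ((s:ℤ) + ((t:ℤ) - 1) - (i:ℤ)))
      = ∑ i ∈ Finset.range (k+1), (k.choose i : ℂ) •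
          (∑ t ∈ Finset.range (k+m-i+1), ((k+m-i).choose t : ℂ) • z i (-1 + (t:ℤ))) := by
  have hstep1 : ∑ s ∈ Finset.range (k+1), ∑ t ∈ Finset.range (m+1),
        ((k.choose s : ℂ) * (m.choose t : ℂ)) •
          (∑ i ∈ Finset.range (s+1), (s.choose i : ℂ) • z i ((s:ℤ) + ((t:ℤ) - 1) - (i:ℤ)))
      = ∑ s ∈ Finset.range (k+1), ∑ i ∈ Finset.range (k+1),
          ((k.choose s : ℂ) * (s.choose i : ℂ)) •
            (∑ t ∈ Finset.range (m+1), (m.choose t : ℂ) • z i ((s:ℤ) + ((t:ℤ) - 1) - (i:ℤ))) := by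
    apply Finset.sum_congr rfl
    intro s hs
    have hs' : Finset.range (s+1) ⊆ Finset.range (k+1) :=
      Finset.range_subset_range.mpr (by have := Finset.mem_range.mp hs; omega)
    have hinner : ∀ t ∈ Finset.range (m+1),
        ((k.choose s : ℂ) * (m.choose t : ℂ)) •
          (∑ i ∈ Finset.range (s+1), (s.choose i : ℂ) • z i ((s:ℤ) + ((t:ℤ) - 1) - (i:ℤ)))
        = ∑ i ∈ Finset.range (k+1), ((k.choose s : ℂ) * (s.choose i : ℂ)) •
            ((m.choose t : ℂ) • z i ((s:ℤ) + ((t:ℤ) - 1) - (i:ℤ))) := by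
      intro t _
      rw [show (∑ i ∈ Finset.range (s+1), (s.choose i : ℂ) • z i ((s:ℤ) + ((t:ℤ) - 1) - (i:ℤ)))
          = ∑ i ∈ Finset.range (k+1), (s.choose i : ℂ) • z i ((s:ℤ) + ((t:ℤ) - 1) - (i:ℤ)) from
        Finset.sum_subset hs' (fun i _ hni => by
          rw [Nat.choose_eq_zero_of_lt (by
            simp only [Finset.mem_range, not_lt] at hni
            omega)]
          simp)]
      rw [Finset.smul_sum]
      apply Finset.sum_congr rfl
      intro i _
      simp only [smul_smul]
      congr 1
      ring
    rw [Finset.sum_congr rfl hinner, Finset.sum_comm]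
    apply Finset.sum_congr rfl
    intro i _
    rw [Finset.smul_sum]
  rw [hstep1, Finset.sum_comm]
  apply Finset.sum_congr rfl
  intro i hi
  have hik : i ≤ k := by have := Finset.mem_range.mp hi; omega
  rw [subset_reindex (fun s => ∑ t ∈ Finset.range (m+1),
    (m.choose t : ℂ) • z i ((s:ℤ) + ((t:ℤ) - 1) - (i:ℤ))) k i]
  congr 1
  have hv := vandermonde_smul (z i) (k-i) m (-1)
  rw [show k+m-i = k-i+m from by omega, ← hv]
  apply Finset.sum_congr rfl
  intro s' _
  rw [Finset.smul_sum]
  apply Finset.sum_congr rfl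
  intro t _
  rw [smul_smul]
  congr 1
  push_cast
  ring

end ClaimA

namespace GradedVertexAlgebra

variable {V : Type*} [AddCommGroup V] [Module ℂ V] (W : GradedVertexAlgebra V)

lemma gstar_sum_left {ι : Type*} (s : Finset ι) (f : ι → V) (v : V) :
    W.gstar (∑ i ∈ s, f i) v = ∑ i ∈ s, W.gstar (f i) v := by
  classical
  induction s using Finset.induction_on with
  | empty => simp [gstar_zero_left]
  | insert _ _ hx ih => rw [Finset.sum_insert hx, Finset.sum_insert hx, gstar_add_left, ih]

lemma O_mem_circ {α : ℕ} {a : V} (ha : a ∈ W.grade α) (b : V) : W.circH α a b ∈ W.O :=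
  Submodule.subset_span ⟨α, a, b, ha, rfl⟩

/-- Associativity computation at homogeneous level. -/
lemma assoc_homog {k m : ℕ} {u v : V} (hu : u ∈ W.grade k) (hv : v ∈ W.grade m) (w : V) :
    W.gstar (W.starH k u v) w - W.starH k u (W.starH m v w) ∈ W.O := by
  obtain ⟨N₁, hN₁⟩ := W.trunc' v w
  obtain ⟨N₂, hN₂⟩ := W.trunc' u w
  -- the inner data
  set D : ℕ → V := fun i => ∑ t ∈ Finset.range (m+1),
    (m.choose t : ℂ) • W.mode v (((t:ℤ) - 1) + (i:ℤ)) w with hD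
  set E : ℕ → V := fun i => ∑ s ∈ Finset.range (k+1),
    (k.choose s : ℂ) • W.mode u ((s:ℤ) + (i:ℤ)) w with hE
  set Apart : ℕ → V := fun i => ∑ s ∈ Finset.range (k+1),
    (k.choose s : ℂ) • W.mode u ((-1 - (i:ℤ)) + (s:ℤ)) (D i) with hApart
  set Bpart : ℕ → V := fun i => ∑ t ∈ Finset.range (m+1),
    (m.choose t : ℂ) • W.mode v ((-2 - (i:ℤ)) + (t:ℤ)) (E i) with hBpart
  -- step 1 : expand gstar of the sum
  have hgr : ∀ i ∈ Finset.range (k+1), W.mode u ((i:ℤ) - 1) v ∈ W.grade (k+m-i) := by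
    intro i hi
    have hik : i ≤ k := by have := Finset.mem_range.mp hi; omega
    apply W.mode_mem_grade hu hv
    push_cast [Nat.cast_sub (show i ≤ k + m by omega)]
    ring
  have step1 : W.gstar (W.starH k u v) w
      = ∑ i ∈ Finset.range (k+1), (k.choose i : ℂ) •
          (∑ t ∈ Finset.range (k+m-i+1), ((k+m-i).choose t : ℂ) •
            W.mode (W.mode u (-1 + (i:ℤ)) v) (-1 + (t:ℤ)) w) := by
    rw [starH, gstar_sum_left]
    apply Finset.sum_congr rfl
    intro i hi
    rw [gstar_smul_left, W.gstar_homog (hgr i hi), starH]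
    simp only [show ∀ (j:ℕ), (-1:ℤ) + (j:ℤ) = (j:ℤ) - 1 from fun j => by ring]
  -- step 2 : reindex (claim A)
  have step2 : W.gstar (W.starH k u v) w
      = ∑ s ∈ Finset.range (k+1), ∑ t ∈ Finset.range (m+1),
          ((k.choose s : ℂ) * (m.choose t : ℂ)) •
            (∑ i ∈ Finset.range (s+1), (s.choose i : ℂ) •
              W.mode (W.mode u (-1 + (i:ℤ)) v) ((s:ℤ) + ((t:ℤ) - 1) - (i:ℤ)) w) := by
    rw [step1, ← claimA_abstract (fun i p => W.mode (W.mode u (-1 + (i:ℤ)) v) p w) k m]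
  -- step 3 : Borcherds identity for each (s,t)
  have step3 : ∀ s ∈ Finset.range (k+1), ∀ t ∈ Finset.range (m+1),
      (∑ i ∈ Finset.range (s+1), (s.choose i : ℂ) •
        W.mode (W.mode u (-1 + (i:ℤ)) v) ((s:ℤ) + ((t:ℤ) - 1) - (i:ℤ)) w)
      = ∑ i ∈ Finset.range (N₁ + N₂ + 1),
          (W.mode u ((s:ℤ) - 1 - i) (W.mode v (((t:ℤ) - 1) + i) w)
            + W.mode v (((t:ℤ) - 1) - 1 - i) (W.mode u ((s:ℤ) + i) w)) := by
    intro s _ t _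
    apply W.borcherds_neg_one u v w s ((t:ℤ) - 1) (N₁ + N₂ + 1)
    · intro i hi
      apply hN₁
      omega
    · intro i hi
      apply hN₂
      omega
  -- step 4 : rearrange into identity part + deep parts
  have step4 : W.gstar (W.starH k u v) w
      = Apart 0 + ((∑ i ∈ Finset.range (N₁ + N₂), Apart (i+1))
          + ∑ i ∈ Finset.range (N₁ + N₂ + 1), Bpart i) := by
    rw [step2, Finset.sum_congr rfl (fun s hs => Finset.sum_congr rfl (fun t ht => by
      rw [step3 s hs t ht]))]
    -- now a triple sum; push scalars in and swap
    have hswap : ∑ s ∈ Finset.range (k+1), ∑ t ∈ Finset.range (m+1),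
        ((k.choose s : ℂ) * (m.choose t : ℂ)) •
          (∑ i ∈ Finset.range (N₁ + N₂ + 1),
            (W.mode u ((s:ℤ) - 1 - i) (W.mode v (((t:ℤ) - 1) + i) w)
              + W.mode v (((t:ℤ) - 1) - 1 - i) (W.mode u ((s:ℤ) + i) w)))
        = ∑ i ∈ Finset.range (N₁ + N₂ + 1), (Apart i + Bpart i) := by
      have hA : ∀ i : ℕ, ∑ s ∈ Finset.range (k+1), ∑ t ∈ Finset.range (m+1),
          ((k.choose s : ℂ) * (m.choose t : ℂ)) •
            W.mode u ((s:ℤ) - 1 - i) (W.mode v (((t:ℤ) - 1) + i) w) = Apart i := by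
        intro i
        simp only [hApart, hD]
        apply Finset.sum_congr rfl
        intro s _
        rw [map_sum, Finset.smul_sum]
        apply Finset.sum_congr rfl
        intro t _
        rw [map_smul, smul_smul, show (-1 : ℤ) - (i:ℤ) + (s:ℤ) = (s:ℤ) - 1 - (i:ℤ) from by ring]
      have hB : ∀ i : ℕ, ∑ s ∈ Finset.range (k+1), ∑ t ∈ Finset.range (m+1),
          ((k.choose s : ℂ) * (m.choose t : ℂ)) •
            W.mode v (((t:ℤ) - 1) - 1 - i) (W.mode u ((s:ℤ) + i) w) = Bpart i := by
        intro i
        simp only [hBpart, hE]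
        rw [Finset.sum_comm]
        apply Finset.sum_congr rfl
        intro t _
        rw [map_sum, Finset.smul_sum]
        apply Finset.sum_congr rfl
        intro s _
        rw [map_smul, smul_smul, show (-2 : ℤ) - (i:ℤ) + (t:ℤ) = ((t:ℤ) - 1) - 1 - (i:ℤ) from by ring]
        congr 1
        ring
      calc ∑ s ∈ Finset.range (k+1), ∑ t ∈ Finset.range (m+1),
            ((k.choose s : ℂ) * (m.choose t : ℂ)) •
              (∑ i ∈ Finset.range (N₁ + N₂ + 1),
                (W.mode u ((s:ℤ) - 1 - i) (W.mode v (((t:ℤ) - 1) + i) w)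
                  + W.mode v (((t:ℤ) - 1) - 1 - i) (W.mode u ((s:ℤ) + i) w)))
          = ∑ i ∈ Finset.range (N₁ + N₂ + 1), ∑ s ∈ Finset.range (k+1),
              ∑ t ∈ Finset.range (m+1), ((k.choose s : ℂ) * (m.choose t : ℂ)) •
                (W.mode u ((s:ℤ) - 1 - i) (W.mode v (((t:ℤ) - 1) + i) w)
                  + W.mode v (((t:ℤ) - 1) - 1 - i) (W.mode u ((s:ℤ) + i) w)) := by
            have e1 : ∀ s ∈ Finset.range (k+1), ∀ t ∈ Finset.range (m+1),
                ((k.choose s : ℂ) * (m.choose t : ℂ)) •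
                  (∑ i ∈ Finset.range (N₁ + N₂ + 1),
                    (W.mode u ((s:ℤ) - 1 - i) (W.mode v (((t:ℤ) - 1) + i) w)
                      + W.mode v (((t:ℤ) - 1) - 1 - i) (W.mode u ((s:ℤ) + i) w)))
                = ∑ i ∈ Finset.range (N₁ + N₂ + 1),
                    ((k.choose s : ℂ) * (m.choose t : ℂ)) •
                      (W.mode u ((s:ℤ) - 1 - i) (W.mode v (((t:ℤ) - 1) + i) w)
                        + W.mode v (((t:ℤ) - 1) - 1 - i) (W.mode u ((s:ℤ) + i) w)) := by
              intro s _ t _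
              rw [Finset.smul_sum]
            rw [Finset.sum_congr rfl (fun s hs => Finset.sum_congr rfl (fun t ht => e1 s hs t ht))]
            rw [Finset.sum_congr rfl (fun s _ => Finset.sum_comm), Finset.sum_comm]
        _ = ∑ i ∈ Finset.range (N₁ + N₂ + 1), (Apart i + Bpart i) := by
            apply Finset.sum_congr rfl
            intro i _
            rw [← hA i, ← hB i, ← Finset.sum_add_distrib]
            apply Finset.sum_congr rfl
            intro s _
            rw [← Finset.sum_add_distrib]
            apply Finset.sum_congr rfl
            intro t _
            rw [smul_add]
    rw [hswap, Finset.sum_add_distrib, Finset.sum_range_succ' Apart (N₁ + N₂)]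
    abel
  -- identity part is the star product
  have hA0 : Apart 0 = W.starH k u (W.starH m v w) := by
    simp only [hApart, hD]
    rw [starH]
    apply Finset.sum_congr rfl
    intro s _
    rw [show (-1 : ℤ) - ((0:ℕ):ℤ) + (s:ℤ) = (s:ℤ) - 1 from by push_cast; ring]
    congr 1
    rw [starH]
    congr 1
    apply Finset.sum_congr rfl
    intro t _
    rw [show ((t:ℤ) - 1) + ((0:ℕ):ℤ) = (t:ℤ) - 1 from by push_cast; ring]
  rw [step4, hA0, add_sub_cancel_left]
  apply W.O.add_mem
  · apply Submodule.sum_mem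
    intro i _
    have hdeep := W.Odeep' hu (show (-1 - ((i+1:ℕ):ℤ)) ≤ -2 from by push_cast; omega) (D (i+1))
    simp only [hApart]
    convert hdeep using 2
  · apply Submodule.sum_mem
    intro i _
    exact W.Odeep' hv (show (-2 - ((i:ℕ):ℤ)) ≤ -2 from by omega) (E i)

end GradedVertexAlgebra
namespace GradedVertexAlgebra

variable {V : Type*} [AddCommGroup V] [Module ℂ V] (W : GradedVertexAlgebra V)

/-- `O(V)` is stable under `∗` on the left by elements `a∘b` with `a, b` homogeneous. -/
lemma right_homog {α m : ℕ} {a b : V} (ha : a ∈ W.grade α) (hb : b ∈ W.grade m) (u : V) :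
    W.gstar (W.circH α a b) u ∈ W.O := by
  obtain ⟨N₁, hN₁⟩ := W.trunc' b u
  obtain ⟨N₂, hN₂⟩ := W.trunc' a u
  set D : ℕ → V := fun i => ∑ t ∈ Finset.range (m+1+1),
    ((m+1).choose t : ℂ) • W.mode b (((t:ℤ) - 1) + (i:ℤ)) u with hD
  set E : ℕ → V := fun i => ∑ s ∈ Finset.range (α+1),
    (α.choose s : ℂ) • W.mode a ((s:ℤ) + (i:ℤ)) u with hE
  set Apart : ℕ → V := fun i => ∑ s ∈ Finset.range (α+1),
    (α.choose s : ℂ) • W.mode a ((-2 - (i:ℤ)) + (s:ℤ)) (D i) with hApart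
  set Bpart : ℕ → V := fun i => ∑ t ∈ Finset.range (m+1+1),
    ((m+1).choose t : ℂ) • W.mode b ((-3 - (i:ℤ)) + (t:ℤ)) (E i) with hBpart
  have hgr : ∀ i ∈ Finset.range (α+1), W.mode a ((i:ℤ) - 2) b ∈ W.grade (α+(m+1)-i) := by
    intro i hi
    have hik : i ≤ α := by have := Finset.mem_range.mp hi; omega
    apply W.mode_mem_grade ha hb
    push_cast [Nat.cast_sub (show i ≤ α + (m+1) by omega)]
    ring
  have step1 : W.gstar (W.circH α a b) u
      = ∑ i ∈ Finset.range (α+1), (α.choose i : ℂ) •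
          (∑ t ∈ Finset.range (α+(m+1)-i+1), ((α+(m+1)-i).choose t : ℂ) •
            W.mode (W.mode a (-2 + (i:ℤ)) b) (-1 + (t:ℤ)) u) := by
    rw [circH, gstar_sum_left]
    apply Finset.sum_congr rfl
    intro i hi
    rw [gstar_smul_left]
    rw [show W.mode a ((i:ℤ) - 2) b = W.mode a (-2 + (i:ℤ)) b from by
      rw [show (-2 : ℤ) + (i:ℤ) = (i:ℤ) - 2 from by ring]]
    rw [W.gstar_homog (by
      rw [show W.mode a (-2 + (i:ℤ)) b = W.mode a ((i:ℤ) - 2) b from by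
        rw [show (-2 : ℤ) + (i:ℤ) = (i:ℤ) - 2 from by ring]]
      exact hgr i hi), starH]
    simp only [show ∀ (j:ℕ), (-1:ℤ) + (j:ℤ) = (j:ℤ) - 1 from fun j => by ring]
  have step2 : W.gstar (W.circH α a b) u
      = ∑ s ∈ Finset.range (α+1), ∑ t ∈ Finset.range (m+1+1),
          ((α.choose s : ℂ) * ((m+1).choose t : ℂ)) •
            (∑ i ∈ Finset.range (s+1), (s.choose i : ℂ) •
              W.mode (W.mode a (-2 + (i:ℤ)) b) ((s:ℤ) + ((t:ℤ) - 1) - (i:ℤ)) u) := by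
    rw [step1, ← claimA_abstract (fun i p => W.mode (W.mode a (-2 + (i:ℤ)) b) p u) α (m+1)]
  have step3 : ∀ s ∈ Finset.range (α+1), ∀ t ∈ Finset.range (m+1+1),
      (∑ i ∈ Finset.range (s+1), (s.choose i : ℂ) •
        W.mode (W.mode a (-2 + (i:ℤ)) b) ((s:ℤ) + ((t:ℤ) - 1) - (i:ℤ)) u)
      = ∑ i ∈ Finset.range (N₁ + N₂ + 1), ((i:ℂ) + 1) •
          (W.mode a ((s:ℤ) - 2 - i) (W.mode b (((t:ℤ) - 1) + i) u)
            - W.mode b (((t:ℤ) - 1) - 2 - i) (W.mode a ((s:ℤ) + i) u)) := by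
    intro s _ t _
    apply W.borcherds_neg_two a b u s ((t:ℤ) - 1) (N₁ + N₂ + 1)
    · intro i hi
      apply hN₁
      omega
    · intro i hi
      apply hN₂
      omega
  have hA : ∀ i : ℕ, ∑ s ∈ Finset.range (α+1), ∑ t ∈ Finset.range (m+1+1),
      ((α.choose s : ℂ) * ((m+1).choose t : ℂ)) •
        W.mode a ((s:ℤ) - 2 - i) (W.mode b (((t:ℤ) - 1) + i) u) = Apart i := by
    intro i
    simp only [hApart, hD]
    apply Finset.sum_congr rfl
    intro s _
    rw [map_sum, Finset.smul_sum]
    apply Finset.sum_congr rfl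
    intro t _
    rw [map_smul, smul_smul, show (-2 : ℤ) - (i:ℤ) + (s:ℤ) = (s:ℤ) - 2 - (i:ℤ) from by ring]
  have hB : ∀ i : ℕ, ∑ s ∈ Finset.range (α+1), ∑ t ∈ Finset.range (m+1+1),
      ((α.choose s : ℂ) * ((m+1).choose t : ℂ)) •
        W.mode b (((t:ℤ) - 1) - 2 - i) (W.mode a ((s:ℤ) + i) u) = Bpart i := by
    intro i
    simp only [hBpart, hE]
    rw [Finset.sum_comm]
    apply Finset.sum_congr rfl
    intro t _
    rw [map_sum, Finset.smul_sum]
    apply Finset.sum_congr rfl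
    intro s _
    rw [map_smul, smul_smul, show (-3 : ℤ) - (i:ℤ) + (t:ℤ) = ((t:ℤ) - 1) - 2 - (i:ℤ) from by ring]
    congr 1
    ring
  have step4 : W.gstar (W.circH α a b) u
      = ∑ i ∈ Finset.range (N₁ + N₂ + 1), ((i:ℂ) + 1) • (Apart i - Bpart i) := by
    rw [step2, Finset.sum_congr rfl (fun s hs => Finset.sum_congr rfl (fun t ht => by
      rw [step3 s hs t ht]))]
    have e1 : ∀ s ∈ Finset.range (α+1), ∀ t ∈ Finset.range (m+1+1),
        ((α.choose s : ℂ) * ((m+1).choose t : ℂ)) •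
          (∑ i ∈ Finset.range (N₁ + N₂ + 1), ((i:ℂ) + 1) •
            (W.mode a ((s:ℤ) - 2 - i) (W.mode b (((t:ℤ) - 1) + i) u)
              - W.mode b (((t:ℤ) - 1) - 2 - i) (W.mode a ((s:ℤ) + i) u)))
        = ∑ i ∈ Finset.range (N₁ + N₂ + 1), ((i:ℂ) + 1) •
            (((α.choose s : ℂ) * ((m+1).choose t : ℂ)) •
              W.mode a ((s:ℤ) - 2 - i) (W.mode b (((t:ℤ) - 1) + i) u)
              - ((α.choose s : ℂ) * ((m+1).choose t : ℂ)) •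
                W.mode b (((t:ℤ) - 1) - 2 - i) (W.mode a ((s:ℤ) + i) u)) := by
      intro s _ t _
      rw [Finset.smul_sum]
      apply Finset.sum_congr rfl
      intro i _
      rw [smul_comm, smul_sub]
    rw [Finset.sum_congr rfl (fun s hs => Finset.sum_congr rfl (fun t ht => e1 s hs t ht))]
    rw [Finset.sum_congr rfl (fun s _ => Finset.sum_comm), Finset.sum_comm]
    apply Finset.sum_congr rfl
    intro i _
    rw [← hA i, ← hB i]
    simp only [smul_sub, Finset.sum_sub_distrib, Finset.smul_sum]
  rw [step4]
  apply Submodule.sum_mem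
  intro i _
  apply W.O.smul_mem
  apply W.O.sub_mem
  · simp only [hApart]
    exact W.Odeep' ha (show (-2 - (i:ℤ)) ≤ -2 from by omega) (D i)
  · simp only [hBpart]
    exact W.Osum_crit hb 1 (show (-3 - (i:ℤ)) + ((1:ℕ):ℤ) ≤ -2 from by push_cast; omega) (E i)

end GradedVertexAlgebra
namespace GradedVertexAlgebra

variable {V : Type*} [AddCommGroup V] [Module ℂ V] (W : GradedVertexAlgebra V)

/-- `O(V)` is stable under `∗` on the right by homogeneous elements:
`u ∗ (a∘b) ∈ O(V)`. -/
lemma left_homog {k α : ℕ} {u a : V} (hu : u ∈ W.grade k) (ha : a ∈ W.grade α) (b : V) :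
    W.starH k u (W.circH α a b) ∈ W.O := by
  obtain ⟨N, hN⟩ := W.truncation u a
  -- expansion via the commutator formula
  have expand : W.starH k u (W.circH α a b)
      = W.circH α a (W.starH k u b)
        + ∑ l ∈ Finset.range N, (∑ j ∈ Finset.range (k+1), ∑ i ∈ Finset.range (α+1),
            ((k.choose j : ℂ) * (α.choose i : ℂ) * zchoose ((j:ℤ) - 1) l) •
              W.mode (W.mode u (l:ℤ) a) (((j:ℤ) - 1) + ((i:ℤ) - 2) - (l:ℤ)) b) := by
    have e0 : W.starH k u (W.circH α a b)
        = ∑ j ∈ Finset.range (k+1), ∑ i ∈ Finset.range (α+1),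
            ((k.choose j : ℂ) * (α.choose i : ℂ)) •
              W.mode u ((j:ℤ) - 1) (W.mode a ((i:ℤ) - 2) b) := by
      rw [starH]
      apply Finset.sum_congr rfl
      intro j _
      rw [circH, map_sum, Finset.smul_sum]
      apply Finset.sum_congr rfl
      intro i _
      rw [map_smul, smul_smul]
    have ecomm : ∀ j i : ℕ, W.mode u ((j:ℤ) - 1) (W.mode a ((i:ℤ) - 2) b)
        = W.mode a ((i:ℤ) - 2) (W.mode u ((j:ℤ) - 1) b)
          + ∑ l ∈ Finset.range N, zchoose ((j:ℤ) - 1) l •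
              W.mode (W.mode u (l:ℤ) a) (((j:ℤ) - 1) + ((i:ℤ) - 2) - (l:ℤ)) b := by
      intro j i
      have hc := W.comm_formula u a b ((j:ℤ) - 1) ((i:ℤ) - 2) N hN
      linear_combination (norm := module) hc
    have e1 : W.starH k u (W.circH α a b)
        = (∑ j ∈ Finset.range (k+1), ∑ i ∈ Finset.range (α+1),
            ((k.choose j : ℂ) * (α.choose i : ℂ)) •
              W.mode a ((i:ℤ) - 2) (W.mode u ((j:ℤ) - 1) b))
          + ∑ j ∈ Finset.range (k+1), ∑ i ∈ Finset.range (α+1),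
              ((k.choose j : ℂ) * (α.choose i : ℂ)) •
                (∑ l ∈ Finset.range N, zchoose ((j:ℤ) - 1) l •
                  W.mode (W.mode u (l:ℤ) a) (((j:ℤ) - 1) + ((i:ℤ) - 2) - (l:ℤ)) b) := by
      rw [e0]
      rw [← Finset.sum_add_distrib]
      apply Finset.sum_congr rfl
      intro j _
      rw [← Finset.sum_add_distrib]
      apply Finset.sum_congr rfl
      intro i _
      rw [ecomm j i, smul_add]
    rw [e1]
    congr 1
    · rw [circH, Finset.sum_comm]
      apply Finset.sum_congr rfl
      intro i _
      rw [starH, map_sum, Finset.smul_sum]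
      apply Finset.sum_congr rfl
      intro j _
      rw [map_smul, smul_smul]
      congr 1
      ring
    · rw [Finset.sum_congr rfl (fun j (_ : j ∈ Finset.range (k+1)) =>
        Finset.sum_congr rfl (fun i (_ : i ∈ Finset.range (α+1)) =>
          (Finset.smul_sum (r := ((k.choose j : ℂ) * (α.choose i : ℂ)))) ))]
      rw [Finset.sum_congr rfl (fun j (_ : j ∈ Finset.range (k+1)) => Finset.sum_comm),
        Finset.sum_comm]
      apply Finset.sum_congr rfl
      intro l _
      apply Finset.sum_congr rfl
      intro j _
      apply Finset.sum_congr rfl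
      intro i _
      rw [smul_smul]
  rw [expand]
  apply W.O.add_mem (W.O_mem_circ ha _)
  apply Submodule.sum_mem
  intro l _
  by_cases hneg : (k:ℤ) + (α:ℤ) - (l:ℤ) - 1 < 0
  · have hz : W.mode u (l:ℤ) a = 0 := W.mode_eq_zero_of_neg hu ha hneg
    rw [hz]
    simp only [mode_zero_left, smul_zero, Finset.sum_const_zero]
    exact W.O.zero_mem
  · push_neg at hneg
    have hlk : l + 1 ≤ k + α := by omega
    set c := W.mode u (l:ℤ) a with hc
    set κ := k + α - 1 - l with hκ
    have hcg : c ∈ W.grade κ := by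
      apply W.mode_mem_grade hu ha
      omega
    -- transform the double sum
    have hSl : (∑ j ∈ Finset.range (k+1), ∑ i ∈ Finset.range (α+1),
          ((k.choose j : ℂ) * (α.choose i : ℂ) * zchoose ((j:ℤ) - 1) l) •
            W.mode c (((j:ℤ) - 1) + ((i:ℤ) - 2) - (l:ℤ)) b)
        = ∑ t ∈ Finset.range (l+1), ((-1:ℂ)^(l-t) * (k.choose t : ℂ)) •
            (∑ σ ∈ Finset.range (α+(k-t)+1), ((α+(k-t)).choose σ : ℂ) •
              W.mode c (((t:ℤ) - 3 - (l:ℤ)) + (σ:ℤ)) b) := by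
      have T1 : ∀ j ∈ Finset.range (k+1), ∀ i ∈ Finset.range (α+1),
          ((k.choose j : ℂ) * (α.choose i : ℂ) * zchoose ((j:ℤ) - 1) l) •
            W.mode c (((j:ℤ) - 1) + ((i:ℤ) - 2) - (l:ℤ)) b
          = ∑ t ∈ Finset.range (l+1),
              ((-1:ℂ)^(l-t) * (α.choose i : ℂ)) •
                (((k.choose j : ℂ) * (j.choose t : ℂ)) •
                  W.mode c (((j:ℤ) - 1) + ((i:ℤ) - 2) - (l:ℤ)) b) := by
        intro j _ i _
        rw [zchoose_pred j l, mul_sum, Finset.sum_smul]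
        apply Finset.sum_congr rfl
        intro t _
        rw [smul_smul]
        congr 1
        ring
      rw [Finset.sum_congr rfl (fun j hj => Finset.sum_congr rfl (fun i hi => T1 j hj i hi))]
      -- reorder : j i t  ->  t i j
      rw [Finset.sum_congr rfl (fun j _ => Finset.sum_comm), Finset.sum_comm]
      rw [Finset.sum_congr rfl (fun t _ => Finset.sum_comm)]
      apply Finset.sum_congr rfl
      intro t _
      -- now : ∑ i, ∑ j, ((-1)^(l-t) * C(α,i)) • ((C(k,j)C(j,t)) • mode ...)
      have T2 : ∀ i ∈ Finset.range (α+1),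
          (∑ j ∈ Finset.range (k+1), ((-1:ℂ)^(l-t) * (α.choose i : ℂ)) •
            (((k.choose j : ℂ) * (j.choose t : ℂ)) •
              W.mode c (((j:ℤ) - 1) + ((i:ℤ) - 2) - (l:ℤ)) b))
          = ((-1:ℂ)^(l-t) * (α.choose i : ℂ)) • ((k.choose t : ℂ) •
              (∑ j' ∈ Finset.range (k-t+1), ((k-t).choose j' : ℂ) •
                W.mode c (((((t+j'):ℕ)):ℤ) - 1 + ((i:ℤ) - 2) - (l:ℤ)) b)) := by
        intro i _
        rw [← Finset.smul_sum]
        rw [subset_reindex (fun j => W.mode c (((j:ℕ):ℤ) - 1 + ((i:ℤ) - 2) - (l:ℤ)) b) k t]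
      rw [Finset.sum_congr rfl (fun i hi => T2 i hi)]
      -- pull scalars, then vandermonde
      have hvdm := vandermonde_smul (fun p => W.mode c p b) α (k-t) ((t:ℤ) - 3 - (l:ℤ))
      rw [show (∑ i ∈ Finset.range (α+1), ((-1:ℂ)^(l-t) * (α.choose i : ℂ)) •
            ((k.choose t : ℂ) • (∑ j' ∈ Finset.range (k-t+1), ((k-t).choose j' : ℂ) •
              W.mode c (((((t+j'):ℕ)):ℤ) - 1 + ((i:ℤ) - 2) - (l:ℤ)) b)))
          = ((-1:ℂ)^(l-t) * (k.choose t : ℂ)) •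
              (∑ i ∈ Finset.range (α+1), ∑ j' ∈ Finset.range (k-t+1),
                ((α.choose i : ℂ) * ((k-t).choose j' : ℂ)) •
                  W.mode c (((t:ℤ) - 3 - (l:ℤ)) + (i:ℤ) + (j':ℤ)) b) from ?_]
      · rw [hvdm]
      · rw [Finset.smul_sum]
        apply Finset.sum_congr rfl
        intro i _
        rw [Finset.smul_sum, Finset.smul_sum, Finset.smul_sum]
        apply Finset.sum_congr rfl
        intro j' _
        simp only [smul_smul]
        rw [show ((((t+j'):ℕ)):ℤ) - 1 + ((i:ℤ) - 2) - (l:ℤ)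
            = ((t:ℤ) - 3 - (l:ℤ)) + (i:ℤ) + (j':ℤ) from by push_cast; ring]
        congr 1
        ring
    rw [hSl]
    apply Submodule.sum_mem
    intro t ht
    have htl : t ≤ l := by have := Finset.mem_range.mp ht; omega
    by_cases htk : t ≤ k
    · apply W.O.smul_mem
      have hrange : α + (k - t) = κ + (l + 1 - t) := by omega
      rw [hrange]
      exact W.Osum_crit hcg (l + 1 - t)
        (show ((t:ℤ) - 3 - (l:ℤ)) + ((l + 1 - t : ℕ):ℤ) ≤ -2 from by push_cast [Nat.cast_sub (by omega : t ≤ l + 1)]; omega) b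
    · rw [Nat.choose_eq_zero_of_lt (by omega : k < t)]
      simp only [Nat.cast_zero, mul_zero, zero_smul]
      exact W.O.zero_mem

end GradedVertexAlgebra
namespace GradedVertexAlgebra

variable {V : Type*} [AddCommGroup V] [Module ℂ V] (W : GradedVertexAlgebra V)

lemma gstar_vac_left (u : V) : W.gstar W.vacuum u = u := by
  rw [W.gstar_homog W.vacuum_mem, starH, Finset.sum_range_one]
  norm_num [W.vacuum_mode]

lemma gstar_vac_right (u : V) : W.gstar u W.vacuum = u := by
  letI := W.decomp
  refine DirectSum.Decomposition.inductionOn W.grade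
    (motive := fun x => W.gstar x W.vacuum = x) ?_ ?_ ?_ u
  · show W.gstar 0 W.vacuum = 0
    rw [gstar_zero_left]
  · intro i x
    show W.gstar (x:V) W.vacuum = (x:V)
    rw [W.gstar_homog x.2, starH, Finset.sum_range_succ']
    have h1 : ∀ j ∈ Finset.range i,
        ((i.choose (j+1) : ℂ)) • W.mode (x : V) (((j+1:ℕ):ℤ) - 1) W.vacuum = 0 := by
      intro j _
      rw [show ((j+1:ℕ):ℤ) - 1 = (j:ℤ) from by push_cast; ring,
        W.creation_nonneg (x : V) _ (Int.ofNat_nonneg j), smul_zero]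
    rw [Finset.sum_congr rfl h1]
    norm_num [W.creation]
  · intro x y hx hy
    show W.gstar (x + y) W.vacuum = x + y
    rw [gstar_add_left, hx, hy]

lemma starH_mem_O (k : ℕ) (x : V) (hx : x ∈ W.grade k) {c : V} (hc : c ∈ W.O) :
    W.starH k x c ∈ W.O := by
  refine Submodule.span_induction (p := fun c _ => W.starH k x c ∈ W.O) ?_ ?_ ?_ ?_ hc
  · rintro y ⟨α, a, v, ha, rfl⟩
    exact W.left_homog hx ha v
  · show W.starH k x 0 ∈ W.O
    rw [starH_zero_right]
    exact W.O.zero_mem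
  · intro y z _ _ hy hz
    show W.starH k x (y + z) ∈ W.O
    rw [starH_add_right]
    exact W.O.add_mem hy hz
  · intro r y _ hy
    show W.starH k x (r • y) ∈ W.O
    rw [starH_smul_right]
    exact W.O.smul_mem r hy

lemma gstar_left_O (u : V) {c : V} (hc : c ∈ W.O) : W.gstar u c ∈ W.O := by
  classical
  rw [W.gstar_eq_sum u c (s := (W.component_finite u).toFinset) (fun k hk => by
    rw [Set.Finite.mem_toFinset] at hk
    simpa using hk)]
  exact Submodule.sum_mem _ (fun k _ => W.starH_mem_O k _ (W.component_mem k u) hc)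

lemma right_homog' {α : ℕ} {a : V} (ha : a ∈ W.grade α) (b u : V) :
    W.gstar (W.circH α a b) u ∈ W.O := by
  letI := W.decomp
  refine DirectSum.Decomposition.inductionOn W.grade
    (motive := fun b => W.gstar (W.circH α a b) u ∈ W.O) ?_ ?_ ?_ b
  · show W.gstar (W.circH α a 0) u ∈ W.O
    rw [circH_zero_right, gstar_zero_left]
    exact W.O.zero_mem
  · intro m y
    exact W.right_homog ha y.2 u
  · intro y z hy hz
    show W.gstar (W.circH α a (y + z)) u ∈ W.O
    rw [circH_add_right, gstar_add_left]
    exact W.O.add_mem hy hz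

lemma gstar_right_O {c : V} (hc : c ∈ W.O) (u : V) : W.gstar c u ∈ W.O := by
  refine Submodule.span_induction (p := fun c _ => W.gstar c u ∈ W.O) ?_ ?_ ?_ ?_ hc
  · rintro y ⟨α, a, v, ha, rfl⟩
    exact W.right_homog' ha v u
  · show W.gstar 0 u ∈ W.O
    rw [gstar_zero_left]
    exact W.O.zero_mem
  · intro y z _ _ hy hz
    show W.gstar (y + z) u ∈ W.O
    rw [gstar_add_left]
    exact W.O.add_mem hy hz
  · intro r y _ hy
    show W.gstar (r • y) u ∈ W.O
    rw [gstar_smul_left]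
    exact W.O.smul_mem r hy

lemma assoc_all (u v w : V) :
    W.gstar (W.gstar u v) w - W.gstar u (W.gstar v w) ∈ W.O := by
  letI := W.decomp
  refine DirectSum.Decomposition.inductionOn W.grade
    (motive := fun u => W.gstar (W.gstar u v) w - W.gstar u (W.gstar v w) ∈ W.O) ?_ ?_ ?_ u
  · show W.gstar (W.gstar 0 v) w - W.gstar 0 (W.gstar v w) ∈ W.O
    rw [gstar_zero_left, gstar_zero_left, gstar_zero_left]
    simpa using W.O.zero_mem
  · intro ku x
    refine DirectSum.Decomposition.inductionOn W.grade
      (motive := fun v => W.gstar (W.gstar (x:V) v) w - W.gstar (x:V) (W.gstar v w) ∈ W.O) ?_ ?_ ?_ v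
    · show W.gstar (W.gstar (x:V) 0) w - W.gstar (x:V) (W.gstar 0 w) ∈ W.O
      rw [gstar_zero_right, gstar_zero_left, gstar_zero_right]
      simpa using W.O.zero_mem
    · intro mv y
      rw [W.gstar_homog x.2, W.gstar_homog y.2, W.gstar_homog x.2]
      exact W.assoc_homog x.2 y.2 w
    · intro v1 v2 h1 h2
      show W.gstar (W.gstar (x:V) (v1 + v2)) w - W.gstar (x:V) (W.gstar (v1 + v2) w) ∈ W.O
      rw [gstar_add_right, gstar_add_left, gstar_add_left, gstar_add_right]
      have h3 := W.O.add_mem h1 h2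
      convert h3 using 1
      abel
  · intro u1 u2 h1 h2
    show W.gstar (W.gstar (u1 + u2) v) w - W.gstar (u1 + u2) (W.gstar v w) ∈ W.O
    rw [gstar_add_left, gstar_add_left, gstar_add_left]
    have h3 := W.O.add_mem h1 h2
    convert h3 using 1
    abel

end GradedVertexAlgebra
/-- `O(V)` is a two-sided ideal for `∗`, and the induced product on
`A(V) = V/O(V)` is associative with the image of the vacuum as identity element. -/
theorem zhu_algebra_structure {V : Type*} [AddCommGroup V] [Module ℂ V]
    (W : GradedVertexAlgebra V) :
    -- `O(V)` is a two-sided ideal for `∗`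
    (∀ u c : V, c ∈ W.O → W.gstar u c ∈ W.O ∧ W.gstar c u ∈ W.O) ∧
    -- the induced product on `A(V) = V/O(V)` is associative
    (∀ u v w : V,
      W.O.mkQ (W.gstar (W.gstar u v) w) = W.O.mkQ (W.gstar u (W.gstar v w))) ∧
    -- the image of the vacuum `𝟙` is a two-sided identity in `A(V)`
    (∀ u : V, W.O.mkQ (W.gstar W.vacuum u) = W.O.mkQ u ∧
      W.O.mkQ (W.gstar u W.vacuum) = W.O.mkQ u) := by
  refine ⟨?_, ?_, ?_⟩
  · intro u c hc
    exact ⟨W.gstar_left_O u hc, W.gstar_right_O hc u⟩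
  · intro u v w
    rw [Submodule.mkQ_apply, Submodule.mkQ_apply, Submodule.Quotient.eq]
    exact W.assoc_all u v w
  · intro u
    rw [W.gstar_vac_left, W.gstar_vac_right]
    exact ⟨rfl, rfl⟩
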